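/- Under the hypotheses of the coherence theorem (deterministic map between linearly independent families, with complete superposition φ¹ = ∑_j q_j ψ¹_j, all q_j ≠ 0, mapped to pure φ² = ∑_j r_j ψ²_j), the ratio matrix satisfies μ_{j j'} = (r̄_{j'}/q̄_{j'})(r_j/q_j) for all j, j', where μ_{j j'} = ⟨ψ¹_{j'}, ψ¹_j⟩ / ⟨ψ²_{j'}, ψ²_j⟩. -/

import Mathlib

open scoped InnerProductSpace ComplexOrder

/-- The rank-one operator `|φ⟩⟨χ| : v ↦ ⟨χ, v⟩ φ`. -/
noncomputable def outer {H : Type*} [NormedAddCommGroup H] [InnerProductSpace ℂ H]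
    (φ χ : H) : H →ₗ[ℂ] H where
  toFun v := ⟪χ, v⟫_ℂ • φ
  map_add' x y := by simp [inner_add_right, add_smul]
  map_smul' c x := by simp [inner_smul_right, smul_smul]

lemma outer_apply' {H : Type*} [NormedAddCommGroup H] [InnerProductSpace ℂ H]
    (φ χ v : H) : outer φ χ v = ⟪χ, v⟫_ℂ • φ := rfl

lemma exists_dual_family {H : Type*} [NormedAddCommGroup H] [InnerProductSpace ℂ H]
    [FiniteDimensional ℂ H] {N : ℕ} (ψ : Fin N → H) (hli : LinearIndependent ℂ ψ) :
    ∃ d : Fin N → H, ∀ i j, ⟪d i, ψ j⟫_ℂ = if i = j then 1 else 0 := by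
  classical
  have hinj : Function.Injective ψ := hli.injective
  have hsub : LinearIndepOn ℂ id (Set.range ψ) := hli.linearIndepOn_id
  have hmem : ∀ j, ψ j ∈ hsub.extend (Set.subset_univ _) :=
    fun j => hsub.subset_extend _ ⟨j, rfl⟩
  set B := Module.Basis.extend hsub with hB
  refine ⟨fun i => (InnerProductSpace.toDual ℂ H).symm
    (LinearMap.toContinuousLinearMap (B.coord ⟨ψ i, hmem i⟩)), fun i j => ?_⟩
  rw [InnerProductSpace.toDual_symm_apply]
  have hj : ψ j = B ⟨ψ j, hmem j⟩ := (Module.Basis.extend_apply_self hsub ⟨ψ j, hmem j⟩).symm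
  rw [LinearMap.coe_toContinuousLinearMap']
  rw [hj, Module.Basis.coord_apply, Module.Basis.repr_self]
  by_cases h : i = j
  · subst h; simp
  · rw [Finsupp.single_apply, if_neg, if_neg h]
    intro he
    exact h (hinj (by simpa using congrArg Subtype.val he)).symm

theorem stmt_16 {H : Type*} [NormedAddCommGroup H] [InnerProductSpace ℂ H]
    [FiniteDimensional ℂ H] {N m : ℕ} (ψ1 ψ2 : Fin N → H)
    (hli1 : LinearIndependent ℂ ψ1) (hli2 : LinearIndependent ℂ ψ2)
    (h1 : ∀ j, ‖ψ1 j‖ = 1) (h2 : ∀ j, ‖ψ2 j‖ = 1)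
    (hnz : ∀ j j', ⟪ψ2 j', ψ2 j⟫_ℂ ≠ 0)
    (A : Fin m → (H →ₗ[ℂ] H))
    (hA : ∑ k, LinearMap.adjoint (A k) ∘ₗ A k = LinearMap.id)
    (c : Fin N → Fin m → ℂ) (hc : ∀ j k, A k (ψ1 j) = c j k • ψ2 j)
    (q r : Fin N → ℂ) (hq : ∀ j, q j ≠ 0)
    (hpure : ∑ k, (A k) ∘ₗ outer (∑ j, q j • ψ1 j) (∑ j, q j • ψ1 j)
          ∘ₗ LinearMap.adjoint (A k)
        = outer (∑ j, r j • ψ2 j) (∑ j, r j • ψ2 j)) :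
    ∀ j j', ⟪ψ1 j', ψ1 j⟫_ℂ / ⟪ψ2 j', ψ2 j⟫_ℂ
      = ((starRingEnd ℂ) (r j') / (starRingEnd ℂ) (q j')) * (r j / q j) := by
  classical
  set conj := starRingEnd ℂ
  -- Step 1: Gram preservation
  have hgram : ∀ j j', ⟪ψ1 j', ψ1 j⟫_ℂ
      = (∑ k, conj (c j' k) * c j k) * ⟪ψ2 j', ψ2 j⟫_ℂ := by
    intro j j'
    have h := congrArg (fun T : H →ₗ[ℂ] H => ⟪ψ1 j', T (ψ1 j)⟫_ℂ) hA
    simp only [LinearMap.sum_apply, LinearMap.comp_apply, LinearMap.id_apply, inner_sum,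
      LinearMap.adjoint_inner_right, hc, inner_smul_left, inner_smul_right] at h
    rw [← h, Finset.sum_mul]
    exact Finset.sum_congr rfl fun k _ => by ring
  -- Step 2: dual family
  obtain ⟨d, hd⟩ := exists_dual_family ψ2 hli2
  set φ1 := ∑ j, q j • ψ1 j with hφ1
  set φ2 := ∑ j, r j • ψ2 j with hφ2
  have hAφ : ∀ k, A k φ1 = ∑ j, (q j * c j k) • ψ2 j := by
    intro k
    rw [hφ1, map_sum]
    exact Finset.sum_congr rfl fun j _ => by rw [map_smul, hc, smul_smul]
  have hdψ : ∀ i (x : H), ⟪ψ2 i, x⟫_ℂ = conj ⟪x, ψ2 i⟫_ℂ := fun i x =>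
    (inner_conj_symm _ _).symm
  have hdA : ∀ k i, ⟪d i, A k φ1⟫_ℂ = q i * c i k := by
    intro k i
    rw [hAφ]
    simp only [inner_sum, inner_smul_right, hd]
    simp [Finset.sum_ite_eq', Finset.mem_univ]
  have hAd : ∀ k i, ⟪A k φ1, d i⟫_ℂ = conj (q i * c i k) := by
    intro k i
    rw [← inner_conj_symm, hdA]
  have hdφ2 : ∀ i, ⟪d i, φ2⟫_ℂ = r i := by
    intro i
    rw [hφ2]
    simp only [inner_sum, inner_smul_right, hd]
    simp [Finset.sum_ite_eq', Finset.mem_univ]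
  have hφ2d : ∀ i, ⟪φ2, d i⟫_ℂ = conj (r i) := by
    intro i; rw [← inner_conj_symm, hdφ2]
  -- Step 3: coefficient identity from hpure
  have key : ∀ j j', q j * conj (q j') * (∑ k, conj (c j' k) * c j k)
      = r j * conj (r j') := by
    intro j j'
    have h := congrArg (fun T : H →ₗ[ℂ] H => ⟪d j, T (d j')⟫_ℂ) hpure
    simp only [LinearMap.sum_apply, LinearMap.comp_apply, outer_apply', map_smul,
      inner_smul_right, smul_eq_mul] at h
    simp only [inner_sum, inner_smul_right] at h
    simp only [LinearMap.adjoint_inner_right, hAd, hdA, hφ2d, hdφ2] at h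
    rw [mul_comm (r j), ← h, Finset.mul_sum]
    refine Finset.sum_congr rfl fun k _ => ?_
    simp only [map_mul]
    ring
  -- Conclusion
  intro j j'
  have hC := hgram j j'
  have hB := key j j'
  have hkq : conj (q j') ≠ 0 := fun h => hq j' (by simpa using congrArg conj h)
  rw [hC, mul_div_assoc, div_self (hnz j j'), mul_one, div_mul_div_comm,
    eq_div_iff (mul_ne_zero hkq (hq j))]
  linear_combination hB
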